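/- Minkowski decomposition of concretization: let q'' be a quadratic vector of dimension p over m noise symbols, and for each k ∈ [p] let e_k be a quadratic form depending only on the single fresh noise symbol with index m+k (a form of type α + β·ε_{m+k}). Then the concretization of the quadratic vector whose k-th component is ext_{0,p}(q''_k) + e_k equals γ(q'') ⊕ Π_{k=1}^p γ(e_k), where ⊕ denotes Minkowski sum and Π the Cartesian product. -/

import Mathlib

/-- A quadratic vector of dimension p over m noise symbols. -/
structure QVec (p m : ℕ) where
  c : Fin p → ℝ
  b : Fin p → Fin m → ℝ
  A : Fin p → Fin m → Fin m → ℝ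

/-- Componentwise evaluation. -/
def QVec.eval {p m : ℕ} (q : QVec p m) (ε : Fin m → ℝ) (k : Fin p) : ℝ :=
  q.c k + ∑ i, q.b k i * ε i + ∑ i, ∑ j, q.A k i j * ε i * ε j

/-- Concretization: image of the unit cube. -/
def QVec.gamma {p m : ℕ} (q : QVec p m) : Set (Fin p → ℝ) :=
  {x | ∃ ε : Fin m → ℝ, (∀ i, ε i ∈ Set.Icc (-1 : ℝ) 1) ∧ ∀ k, x k = q.eval ε k}

/-- Lemma (Minkowski decomposition of the concretization of the join):
the concretization of the vector whose k-th component is `ext_{0,p}(q''_k) + (α k + β k · ε_{m+k})`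
is the Minkowski sum of `γ(q'')` with the box `Π_k γ(α k + β k · ε_{m+k})`. -/
theorem gamma_join_minkowski_decomp (p m : ℕ) (q'' : QVec p m) (α β : Fin p → ℝ) :
    {x : Fin p → ℝ | ∃ ε : Fin (m + p) → ℝ, (∀ i, ε i ∈ Set.Icc (-1 : ℝ) 1) ∧
        ∀ k, x k = q''.eval (fun i => ε (Fin.castAdd p i)) k + (α k + β k * ε (Fin.natAdd m k))} =
    {z : Fin p → ℝ | ∃ x ∈ q''.gamma, ∃ y : Fin p → ℝ,
        (∀ k, y k ∈ Set.Icc (α k - |β k|) (α k + |β k|)) ∧ z = x + y} := by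
  ext x
  constructor
  · rintro ⟨ε, hε, hx⟩
    refine ⟨fun k => q''.eval (fun i => ε (Fin.castAdd p i)) k,
      ⟨fun i => ε (Fin.castAdd p i), fun i => hε _, fun k => rfl⟩,
      fun k => α k + β k * ε (Fin.natAdd m k), fun k => ?_, ?_⟩
    · show α k + β k * ε (Fin.natAdd m k) ∈ Set.Icc (α k - |β k|) (α k + |β k|)
      have h := hε (Fin.natAdd m k)
      have habs : |β k * ε (Fin.natAdd m k)| ≤ |β k| := by
        rw [abs_mul]
        calc |β k| * |ε (Fin.natAdd m k)| ≤ |β k| * 1 :=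
              mul_le_mul_of_nonneg_left (abs_le.mpr ⟨h.1, h.2⟩) (abs_nonneg _)
          _ = |β k| := mul_one _
      obtain ⟨h1, h2⟩ := abs_le.mp habs
      exact ⟨by linarith, by linarith⟩
    · funext k; simpa using hx k
  · rintro ⟨xx, ⟨ε₁, hε₁, hxx⟩, y, hy, rfl⟩
    set E : Fin (m + p) → ℝ := fun i =>
      if h : (i : ℕ) < m then ε₁ ⟨i, h⟩
      else (if β ⟨(i : ℕ) - m, by omega⟩ = 0 then 0
        else (y ⟨(i : ℕ) - m, by omega⟩ - α ⟨(i : ℕ) - m, by omega⟩) / β ⟨(i : ℕ) - m, by omega⟩)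
      with hE
    have hE1 : ∀ i : Fin m, E (Fin.castAdd p i) = ε₁ i := by
      intro i
      rw [hE]
      dsimp only
      have hlt : ((Fin.castAdd p i : Fin (m + p)) : ℕ) < m := i.isLt
      rw [dif_pos hlt]
      exact congrArg ε₁ (Fin.ext (by simp))
    have hE2 : ∀ k : Fin p, E (Fin.natAdd m k) =
        (if β k = 0 then 0 else (y k - α k) / β k) := by
      intro k
      rw [hE]
      dsimp only
      have hlt : ¬ ((Fin.natAdd m k : Fin (m + p)) : ℕ) < m := by simp
      rw [dif_neg hlt]
      have hk' : (⟨((Fin.natAdd m k : Fin (m + p)) : ℕ) - m, by omega⟩ : Fin p) = k := by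
        apply Fin.ext; simp
      rw [hk']
    refine ⟨E, fun i => ?_, fun k => ?_⟩
    · by_cases h : (i : ℕ) < m
      · rw [hE]; dsimp only; rw [dif_pos h]; exact hε₁ _
      · rw [hE]; dsimp only; rw [dif_neg h]
        split_ifs with hb
        · exact ⟨by norm_num, by norm_num⟩
        · set k : Fin p := ⟨(i : ℕ) - m, by omega⟩
          have hyk := hy k
          have hle : |y k - α k| ≤ |β k| :=
            abs_le.mpr ⟨by linarith [hyk.1], by linarith [hyk.2]⟩
          have h1 : |(y k - α k) / β k| ≤ 1 := by
            rw [abs_div]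
            exact div_le_one_of_le₀ hle (abs_nonneg _)
          rw [Set.mem_Icc]
          exact abs_le.mp h1
    · have harg : (fun i : Fin m => E (Fin.castAdd p i)) = ε₁ := funext hE1
      rw [Pi.add_apply, hxx k, harg, hE2 k]
      congr 1
      split_ifs with hb
      · have hyk := hy k
        rw [hb] at hyk
        simp only [abs_zero, sub_zero, add_zero] at hyk
        rw [hb]
        have : y k = α k := le_antisymm hyk.2 hyk.1
        simp [this]
      · field_simp
        ring
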